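/- Two permutations σ, τ of {1, ..., n} have the same Lehmer code components c_{m+1}, ..., cₙ (for some m ∈ {1, ..., n-1}) if and only if for every j ∈ {m, m+1, ..., n}, the sets {σ⁻¹(1), ..., σ⁻¹(j)}-images {x_{σ⁻¹(1)}, ..., x_{σ⁻¹(j)}} and {x_{τ⁻¹(1)}, ..., x_{τ⁻¹(j)}} coincide for any injective assignment of distinct values x₁, ..., xₙ; equivalently, the chains of initial-segment preimage sets {σ⁻¹(1),...,σ⁻¹(j)} for j ≥ m agree. -/

import Mathlib

/-- The Lehmer code (0-indexed): component `k` counts the `i < k` with `σ⁻¹ i < σ⁻¹ k`. -/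
def lehmerCode (n : ℕ) (σ : Equiv.Perm (Fin n)) (k : Fin n) : ℕ :=
  (Finset.univ.filter fun i : Fin n => i < k ∧ σ.symm i < σ.symm k).card

namespace TrailingAux

variable {n : ℕ}

/-- The set of preimages of `{0,…,j-1}` as a Finset. -/
def pre (σ : Equiv.Perm (Fin n)) (j : ℕ) : Finset (Fin n) :=
  Finset.univ.filter fun p : Fin n => (σ p : ℕ) < j

lemma mem_pre {σ : Equiv.Perm (Fin n)} {j : ℕ} {p : Fin n} :
    p ∈ pre σ j ↔ (σ p : ℕ) < j := by simp [pre]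

lemma coe_pre (σ : Equiv.Perm (Fin n)) (j : ℕ) :
    (↑(pre σ j) : Set (Fin n)) = (fun i => σ.symm i) '' {i : Fin n | (i : ℕ) < j} := by
  ext p
  simp only [Finset.coe_filter, pre, Finset.mem_univ, true_and, Set.mem_setOf_eq,
    Set.mem_image]
  constructor
  · intro h; exact ⟨σ p, h, σ.symm_apply_apply p⟩
  · rintro ⟨i, hi, rfl⟩; simpa using hi

lemma code_eq (σ : Equiv.Perm (Fin n)) (k : Fin n) :
    lehmerCode n σ k = ((pre σ (k : ℕ)).filter fun p => p < σ.symm k).card := by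
  rw [lehmerCode, pre, Finset.filter_filter]
  refine Finset.card_bij' (fun i _ => σ.symm i) (fun p _ => σ p) ?_ ?_ ?_ ?_
  · intro i hi
    simp only [Finset.mem_filter, Finset.mem_univ, true_and] at hi ⊢
    exact ⟨by simpa using (Fin.lt_def.mp hi.1), hi.2⟩
  · intro p hp
    simp only [Finset.mem_filter, Finset.mem_univ, true_and] at hp ⊢
    exact ⟨Fin.lt_def.mpr (by simpa using hp.1), by simpa using hp.2⟩
  · intro i _; simp
  · intro p _; simp

lemma rank_inj {T : Finset (Fin n)} {q q' : Fin n} (hq : q ∈ T) (hq' : q' ∈ T)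
    (h : (T.filter fun p => p < q).card = (T.filter fun p => p < q').card) : q = q' := by
  rcases lt_trichotomy q q' with h1 | h1 | h1
  · exfalso
    have hss : (T.filter fun p => p < q) ⊂ (T.filter fun p => p < q') := by
      refine (Finset.ssubset_iff_of_subset
        (Finset.monotone_filter_right _ fun p _ hp => lt_trans hp h1)).mpr ?_
      exact ⟨q, Finset.mem_filter.mpr ⟨hq, h1⟩, by simp⟩
    exact absurd h (Finset.card_lt_card hss).ne
  · exact h1
  · exfalso
    have hss : (T.filter fun p => p < q') ⊂ (T.filter fun p => p < q) := by
      refine (Finset.ssubset_iff_of_subset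
        (Finset.monotone_filter_right _ fun p _ hp => lt_trans hp h1)).mpr ?_
      exact ⟨q', Finset.mem_filter.mpr ⟨hq', h1⟩, by simp⟩
    exact absurd h.symm (Finset.card_lt_card hss).ne

lemma filter_succ (σ : Equiv.Perm (Fin n)) (k : Fin n) :
    ((pre σ (k : ℕ)).filter fun p => p < σ.symm k).card
      = ((pre σ ((k : ℕ) + 1)).filter fun p => p < σ.symm k).card := by
  congr 1
  ext p
  simp only [Finset.mem_filter, mem_pre]
  constructor
  · rintro ⟨h1, h2⟩; exact ⟨Nat.lt_succ_of_lt h1, h2⟩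
  · rintro ⟨h1, h2⟩
    refine ⟨lt_of_le_of_ne (Nat.lt_succ_iff.mp h1) fun he => ?_, h2⟩
    have hpk : p = σ.symm k := by
      have : σ p = k := Fin.ext he
      simpa using congrArg σ.symm this
    rw [hpk] at h2
    exact lt_irrefl _ h2

lemma pre_erase (σ : Equiv.Perm (Fin n)) (k : Fin n) :
    pre σ (k : ℕ) = (pre σ ((k : ℕ) + 1)).erase (σ.symm k) := by
  ext p
  simp only [mem_pre, Finset.mem_erase]
  constructor
  · intro h
    refine ⟨fun he => ?_, Nat.lt_succ_of_lt h⟩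
    rw [he] at h; simp at h
  · rintro ⟨h1, h2⟩
    refine lt_of_le_of_ne (Nat.lt_succ_iff.mp h2) fun he => h1 ?_
    have : σ p = k := Fin.ext he
    simpa using congrArg σ.symm this

lemma symm_mem_pre_succ (σ : Equiv.Perm (Fin n)) (k : Fin n) :
    σ.symm k ∈ pre σ ((k : ℕ) + 1) := by
  simp [mem_pre]

/-- Codes at indices ≥ m determine the chain of preimage sets. -/
lemma codes_to_chains {m : ℕ} {σ τ : Equiv.Perm (Fin n)}
    (h : ∀ k : Fin n, m ≤ (k : ℕ) → lehmerCode n σ k = lehmerCode n τ k) :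
    ∀ j, m ≤ j → j ≤ n → pre σ j = pre τ j := by
  have key : ∀ t j, n - j ≤ t → m ≤ j → j ≤ n → pre σ j = pre τ j := by
    intro t
    induction t with
    | zero =>
      intro j ht _ hj
      have : j = n := le_antisymm hj (Nat.sub_eq_zero_iff_le.mp (Nat.le_zero.mp ht))
      subst this
      ext p; simp [mem_pre, p.isLt, (σ p).isLt, (τ p).isLt]
    | succ t ih =>
      intro j ht hmj hj
      rcases eq_or_lt_of_le hj with rfl | hjn
      · ext p; simp [mem_pre, (σ p).isLt, (τ p).isLt]
      · set k : Fin n := ⟨j, hjn⟩ with hk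
        have hsucc : pre σ (j + 1) = pre τ (j + 1) :=
          ih (j + 1) (by omega) (by omega) (by omega)
        have hkj : (k : ℕ) = j := rfl
        -- codes at k agree, deduce σ.symm k = τ.symm k
        have hcode := h k hmj
        rw [code_eq, code_eq, filter_succ, filter_succ, hkj] at hcode
        have hσ : σ.symm k ∈ pre σ (j + 1) := by simpa [hkj] using symm_mem_pre_succ σ k
        have hτ : τ.symm k ∈ pre σ (j + 1) := by
          rw [hsucc]; simpa [hkj] using symm_mem_pre_succ τ k
        have heq : σ.symm k = τ.symm k := by
          refine rank_inj hσ hτ ?_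
          rw [hcode, hsucc]
        have e1 := pre_erase σ k
        have e2 := pre_erase τ k
        rw [hkj] at e1 e2
        rw [e1, e2, hsucc, heq]
  intro j hmj hj
  exact key (n - j) j le_rfl hmj hj

/-- The chain of preimage sets determines the codes at indices ≥ m. -/
lemma chains_to_codes {m : ℕ} {σ τ : Equiv.Perm (Fin n)}
    (h : ∀ j, m ≤ j → j ≤ n → pre σ j = pre τ j) :
    ∀ k : Fin n, m ≤ (k : ℕ) → lehmerCode n σ k = lehmerCode n τ k := by
  intro k hk
  have h1 : pre σ (k : ℕ) = pre τ (k : ℕ) := h _ hk (le_of_lt k.isLt)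
  have h2 : pre σ ((k : ℕ) + 1) = pre τ ((k : ℕ) + 1) := h _ (by omega) k.isLt
  have heq : σ.symm k = τ.symm k := by
    have hτm : τ.symm k ∈ pre σ ((k : ℕ) + 1) := by
      rw [h2]; exact symm_mem_pre_succ τ k
    have hτn : τ.symm k ∉ pre σ (k : ℕ) := by
      rw [h1, pre_erase τ k]; simp
    rw [mem_pre] at hτm
    rw [mem_pre] at hτn
    have : (σ (τ.symm k) : ℕ) = (k : ℕ) := by omega
    have hσtk : σ (τ.symm k) = k := Fin.ext this
    exact (by simpa using congrArg σ.symm hσtk : τ.symm k = σ.symm k).symm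
  rw [code_eq, code_eq, h1, heq]

end TrailingAux

theorem trailing_code_iff_chains (n m : ℕ) (hm : 1 ≤ m) (hmn : m ≤ n - 1)
    (σ τ : Equiv.Perm (Fin n)) :
    ((∀ k : Fin n, m ≤ (k : ℕ) → lehmerCode n σ k = lehmerCode n τ k) ↔
      (∀ x : Fin n → ℝ, Function.Injective x → ∀ j, m ≤ j → j ≤ n →
        (fun i => x (σ.symm i)) '' {i : Fin n | (i : ℕ) < j}
          = (fun i => x (τ.symm i)) '' {i : Fin n | (i : ℕ) < j})) ∧
    ((∀ x : Fin n → ℝ, Function.Injective x → ∀ j, m ≤ j → j ≤ n →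
        (fun i => x (σ.symm i)) '' {i : Fin n | (i : ℕ) < j}
          = (fun i => x (τ.symm i)) '' {i : Fin n | (i : ℕ) < j}) ↔
      (∀ j, m ≤ j → j ≤ n →
        (fun i => σ.symm i) '' {i : Fin n | (i : ℕ) < j}
          = (fun i => τ.symm i) '' {i : Fin n | (i : ℕ) < j})) := by
  open TrailingAux in
  -- a fixed injective valuation
  have hval : Function.Injective (fun i : Fin n => (i : ℝ)) := by
    intro a b hab
    have h' : ((a : ℕ) : ℝ) = ((b : ℕ) : ℝ) := hab
    exact Fin.ext (by exact_mod_cast h')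
  -- chains of sets ↔ chains of value sets
  have chainval : (∀ j, m ≤ j → j ≤ n →
        (fun i => σ.symm i) '' {i : Fin n | (i : ℕ) < j}
          = (fun i => τ.symm i) '' {i : Fin n | (i : ℕ) < j}) ↔
      (∀ x : Fin n → ℝ, Function.Injective x → ∀ j, m ≤ j → j ≤ n →
        (fun i => x (σ.symm i)) '' {i : Fin n | (i : ℕ) < j}
          = (fun i => x (τ.symm i)) '' {i : Fin n | (i : ℕ) < j}) := by
    constructor
    · intro h x hx j hmj hj
      have e1 : (fun i : Fin n => x (σ.symm i)) '' {i : Fin n | (i : ℕ) < j}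
          = x '' ((fun i => σ.symm i) '' {i : Fin n | (i : ℕ) < j}) :=
        (Set.image_image _ _ _).symm
      have e2 : (fun i : Fin n => x (τ.symm i)) '' {i : Fin n | (i : ℕ) < j}
          = x '' ((fun i => τ.symm i) '' {i : Fin n | (i : ℕ) < j}) :=
        (Set.image_image _ _ _).symm
      rw [e1, e2, h j hmj hj]
    · intro h j hmj hj
      have := h (fun i : Fin n => (i : ℝ)) hval j hmj hj
      have h2 : (fun i : Fin n => (i : ℝ)) '' ((fun i => σ.symm i) '' {i : Fin n | (i : ℕ) < j})
          = (fun i : Fin n => (i : ℝ)) '' ((fun i => τ.symm i) '' {i : Fin n | (i : ℕ) < j}) := by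
        rw [Set.image_image, Set.image_image]
        exact this
      exact Set.image_injective.mpr hval h2
  -- chains of sets ↔ Finset chains
  have chainfin : (∀ j, m ≤ j → j ≤ n →
        (fun i => σ.symm i) '' {i : Fin n | (i : ℕ) < j}
          = (fun i => τ.symm i) '' {i : Fin n | (i : ℕ) < j}) ↔
      (∀ j, m ≤ j → j ≤ n → pre σ j = pre τ j) := by
    constructor
    · intro h j hmj hj
      apply Finset.coe_injective
      rw [coe_pre, coe_pre]
      exact h j hmj hj
    · intro h j hmj hj
      rw [← coe_pre, ← coe_pre, h j hmj hj]
  constructor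
  · constructor
    · intro h
      rw [← chainval, chainfin]
      exact codes_to_chains h
    · intro h
      exact chains_to_codes (chainfin.mp (chainval.mpr h))
  · rw [← chainval]
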